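/- Let n ≥ 1 and let R denote the Radon transform on ℝ^{n+1} ≅ ℝⁿ × ℝ: R(φ)((ω,θ), p) = ∫_{(ω,θ)·(x,y)=p} φ dm for (ω,θ) ∈ Sⁿ, p ∈ ℝ. For F ∈ 𝒮(ℝⁿ × ℝ) and G(x,y) = ∫_{ℝⁿ} F(x+u, y−|u|²) du, the relation R(G)((ω,θ), p) = ∫_{ℝⁿ} R(F)((ω,θ), p + (ω,θ)·(u, −|u|²)) du holds; that is, R ∘ P = Q_p ∘ R where Q_p(ψ)((ω,θ),p) = ∫_{ℝⁿ} ψ((ω,θ), p + ω·u − θ|u|²) du. -/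

import Mathlib

open MeasureTheory Module
open scoped RealInnerProductSpace ENNReal NNReal

namespace S17

lemma hausdorff_eq_smul_volume (n : ℕ) :
    ∃ c : ℝ≥0∞, (μH[(n : ℝ)] : Measure (EuclideanSpace ℝ (Fin n))) = c • volume := by
  have h : ((n : ℝ)) = ((finrank ℝ (EuclideanSpace ℝ (Fin n)) : ℕ) : ℝ) := by
    rw [finrank_euclideanSpace_fin]
  haveI : (μH[(n : ℝ)] : Measure (EuclideanSpace ℝ (Fin n))).IsAddHaarMeasure := by
    rw [h]; exact MeasureTheory.isAddHaarMeasure_hausdorffMeasure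
  refine ⟨(Measure.addHaarScalarFactor (μH[(n : ℝ)] : Measure (EuclideanSpace ℝ (Fin n))) volume :
      ℝ≥0), ?_⟩
  have := Measure.isAddLeftInvariant_eq_smul
    (μH[(n : ℝ)] : Measure (EuclideanSpace ℝ (Fin n))) volume
  rw [ENNReal.smul_def] at this
  exact this

variable {V : Type*} [NormedAddCommGroup V] [InnerProductSpace ℝ V]
  [MeasurableSpace V] [BorelSpace V] [FiniteDimensional ℝ V] {n : ℕ}

lemma exists_isometry_orthogonal (hdim : finrank ℝ V = n + 1) (ν : V) (hν : ‖ν‖ = 1) :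
    ∃ T : EuclideanSpace ℝ (Fin n) →ₗᵢ[ℝ] V,
      (∀ x, ⟪ν, T x⟫ = 0) ∧ (∀ z : V, ⟪ν, z⟫ = 0 → ∃ x, T x = z) := by
  haveI : Fact (finrank ℝ V = n + 1) := ⟨hdim⟩
  have hν0 : ν ≠ 0 := by
    intro h; rw [h, norm_zero] at hν; norm_num at hν
  have hK : finrank ℝ ((ℝ ∙ ν)ᗮ : Submodule ℝ V) = n :=
    Submodule.finrank_orthogonal_span_singleton hν0
  let B := (stdOrthonormalBasis ℝ ((ℝ ∙ ν)ᗮ : Submodule ℝ V)).reindex (finCongr hK)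
  refine ⟨((ℝ ∙ ν)ᗮ : Submodule ℝ V).subtypeₗᵢ.comp B.repr.symm.toLinearIsometry, ?_, ?_⟩
  · intro x
    have hmem : (B.repr.symm x : V) ∈ ((ℝ ∙ ν)ᗮ : Submodule ℝ V) := (B.repr.symm x).2
    have := Submodule.mem_orthogonal_singleton_iff_inner_right.mp hmem
    simpa using this
  · intro z hz
    have hmem : z ∈ ((ℝ ∙ ν)ᗮ : Submodule ℝ V) :=
      Submodule.mem_orthogonal_singleton_iff_inner_right.mpr hz
    exact ⟨B.repr ⟨z, hmem⟩, by simp⟩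

end S17

namespace S17
variable {V : Type*} [NormedAddCommGroup V] [InnerProductSpace ℝ V]
  [MeasurableSpace V] [BorelSpace V] [FiniteDimensional ℝ V] {n : ℕ}

lemma radon_param (ν : V) (hν : ‖ν‖ = 1)
    (T : EuclideanSpace ℝ (Fin n) →ₗᵢ[ℝ] V)
    (hT0 : ∀ x, ⟪ν, T x⟫ = 0) (hTs : ∀ z : V, ⟪ν, z⟫ = 0 → ∃ x, T x = z)
    (φ : V → ℝ) (hφ : Continuous φ) (s : ℝ) :
    ∫ w in {w : V | ⟪ν, w⟫ = s}, φ w ∂μH[(n : ℝ)]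
      = ∫ x : EuclideanSpace ℝ (Fin n), φ (s • ν + T x) ∂μH[(n : ℝ)] := by
  set e : EuclideanSpace ℝ (Fin n) → V := fun x => s • ν + T x with he
  have hiso : Isometry e := by
    apply Isometry.of_dist_eq
    intro x y
    have : e x - e y = T (x - y) := by simp [he, map_sub]
    rw [dist_eq_norm, dist_eq_norm, this, T.norm_map]
  have hrange : Set.range e = {w : V | ⟪ν, w⟫ = s} := by
    ext w
    constructor
    · rintro ⟨x, rfl⟩
      simp only [he, Set.mem_setOf_eq, inner_add_right, real_inner_smul_right, hT0,
        real_inner_self_eq_norm_sq, hν]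
      ring
    · intro hw
      have hz : ⟪ν, w - s • ν⟫ = 0 := by
        simp only [inner_sub_right, real_inner_smul_right, real_inner_self_eq_norm_sq, hν]
        simp only [Set.mem_setOf_eq] at hw
        rw [hw]; ring
      obtain ⟨x, hx⟩ := hTs _ hz
      exact ⟨x, by simp [he, hx]⟩
  have hmap : Measure.map e μH[(n : ℝ)] = μH[(n : ℝ)].restrict {w : V | ⟪ν, w⟫ = s} := by
    rw [hiso.map_hausdorffMeasure (Or.inl (by positivity)), hrange]
  rw [← hmap, integral_map hiso.continuous.measurable.aemeasurable
    (hφ.aestronglyMeasurable.mono_ac (Measure.AbsolutelyContinuous.refl _))]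

lemma schwartz_bound (F : SchwartzMap V ℝ) (k : ℕ) :
    ∃ C : ℝ, 0 < C ∧ ∀ x, ‖F x‖ ≤ C * ((1 + ‖x‖) ^ k)⁻¹ := by
  refine ⟨max 1 (2 ^ k *
      (Finset.Iic (k, 0)).sup (fun m => SchwartzMap.seminorm ℝ m.1 m.2) F),
    lt_of_lt_of_le one_pos (le_max_left _ _), fun x => ?_⟩
  have h := SchwartzMap.one_add_le_sup_seminorm_apply (𝕜 := ℝ) (m := (k, 0)) le_rfl le_rfl F x
  rw [norm_iteratedFDeriv_zero] at h
  have h2 : ‖F x‖ * (1 + ‖x‖) ^ k ≤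
      max 1 (2 ^ k * (Finset.Iic (k, 0)).sup (fun m => SchwartzMap.seminorm ℝ m.1 m.2) F) :=
    le_trans (by rw [mul_comm]; exact h) (le_max_right _ _)
  have hpos : (0:ℝ) < (1 + ‖x‖) ^ k := by positivity
  calc ‖F x‖ = ‖F x‖ * (1 + ‖x‖) ^ k * ((1 + ‖x‖) ^ k)⁻¹ := by field_simp
  _ ≤ _ := mul_le_mul_of_nonneg_right h2 (by positivity)

lemma inv_pow_bound {a b w : ℝ} (ha : 0 ≤ a) (hb : 0 ≤ b) (haw : a ≤ w) (hbw : b ≤ w) (m : ℕ) :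
    ((1 + w) ^ (2 * m))⁻¹ ≤ ((1 + a) ^ m)⁻¹ * ((1 + b) ^ m)⁻¹ := by
  rw [← mul_inv, ← mul_pow]
  have hw : (0:ℝ) ≤ w := le_trans ha haw
  have key : (1 + a) * (1 + b) ≤ (1 + w) ^ 2 := by nlinarith
  have : ((1 + a) * (1 + b)) ^ m ≤ (1 + w) ^ (2 * m) := by
    rw [pow_mul]
    exact pow_le_pow_left₀ (by positivity) key m
  exact inv_anti₀ (by positivity) this

lemma integrable_one_add_norm_pow {n m : ℕ} (hm : n < m) (x₀ : EuclideanSpace ℝ (Fin n)) :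
    Integrable (fun x : EuclideanSpace ℝ (Fin n) => ((1 + ‖x + x₀‖) ^ m)⁻¹) := by
  have h : Integrable (fun x : EuclideanSpace ℝ (Fin n) => (1 + ‖x‖) ^ (-(m:ℝ))) := by
    apply integrable_one_add_norm
    rw [finrank_euclideanSpace_fin]
    exact_mod_cast hm
  refine (h.comp_add_right x₀).congr (Filter.Eventually.of_forall fun x => ?_)
  show (1 + ‖x + x₀‖) ^ (-(m:ℝ)) = ((1 + ‖x + x₀‖) ^ m)⁻¹
  rw [Real.rpow_neg (by positivity), Real.rpow_natCast]

end S17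

namespace S17

lemma cont_aux {n : ℕ} (m : ℕ) (p' θ : ℝ) (ω : EuclideanSpace ℝ (Fin n)) :
    Continuous (fun u : EuclideanSpace ℝ (Fin n) =>
      ((1 + |p' + (⟪ω, u⟫ - θ * ‖u‖ ^ 2)|) ^ m)⁻¹) := by
  have h1 : Continuous (fun u : EuclideanSpace ℝ (Fin n) =>
      (1 + |p' + (⟪ω, u⟫ - θ * ‖u‖ ^ 2)|) ^ m) := by
    apply Continuous.pow
    apply Continuous.add continuous_const
    apply Continuous.abs
    apply Continuous.add continuous_const
    exact ((continuous_const.inner continuous_id).sub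
      (continuous_const.mul (continuous_norm.pow 2)))
  exact h1.inv₀ (fun x => by positivity)

lemma key_integrable_theta_ne {n m : ℕ} (hm : n < m) (p' θ : ℝ) (hθ : θ ≠ 0)
    (ω : EuclideanSpace ℝ (Fin n)) :
    Integrable (fun u : EuclideanSpace ℝ (Fin n) =>
      ((1 + |p' + (⟪ω, u⟫ - θ * ‖u‖ ^ 2)|) ^ m)⁻¹) := by
  set u₀ : EuclideanSpace ℝ (Fin n) := (2 * θ)⁻¹ • ω with hu₀
  set A : ℝ := p' + ‖ω‖ ^ 2 / (4 * θ) with hA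
  have hθ2 : (2 * θ) ≠ 0 := by simp [hθ]
  have hkey : ∀ u, p' + (⟪ω, u⟫ - θ * ‖u‖ ^ 2) = A - θ * ‖u - u₀‖ ^ 2 := by
    intro u
    have h1 : ‖u - u₀‖ ^ 2 = ‖u‖ ^ 2 - 2 * ⟪u, u₀⟫ + ‖u₀‖ ^ 2 := norm_sub_sq_real u u₀
    have h2 : ⟪u, u₀⟫ = (2 * θ)⁻¹ * ⟪u, ω⟫ := real_inner_smul_right u ω _
    have h3 : ‖u₀‖ ^ 2 = ((2 * θ)⁻¹) ^ 2 * ‖ω‖ ^ 2 := by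
      rw [hu₀, norm_smul, mul_pow, Real.norm_eq_abs, sq_abs]
    have h4 : ⟪u, ω⟫ = ⟪ω, u⟫ := real_inner_comm ω u
    rw [h1, h2, h3, h4, hA]
    field_simp
    ring
  set ε : ℝ := min 2 (|θ| / 2) with hε
  have hεpos : 0 < ε := by
    apply lt_min two_pos
    have := abs_pos.mpr hθ
    linarith
  have hε2 : ε ≤ 2 := min_le_left _ _
  have hεθ : ε ≤ |θ| / 2 := min_le_right _ _
  set Rb : ℝ := Real.sqrt ((2 * |A| + 2) / |θ|) with hRb
  have hRbsq : Rb ^ 2 = (2 * |A| + 2) / |θ| := by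
    rw [hRb, Real.sq_sqrt]
    positivity
  set g : EuclideanSpace ℝ (Fin n) → ℝ := fun u =>
    Set.indicator (Metric.closedBall u₀ Rb) (fun _ => (1:ℝ)) u
      + (2 / ε) ^ m * ((1 + ‖u - u₀‖) ^ (2 * m))⁻¹ with hg
  have hgint : Integrable g := by
    apply Integrable.add
    · rw [integrable_indicator_iff measurableSet_closedBall]
      apply (integrableOn_const_iff (C := (1:ℝ))).mpr
      exact Or.inr measure_closedBall_lt_top
    · have := (integrable_one_add_norm_pow (show n < 2 * m by omega) (-u₀)).const_mul
        ((2 / ε) ^ m)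
      refine this.congr (Filter.Eventually.of_forall fun x => ?_)
      simp [sub_eq_add_neg]
  refine hgint.mono' (cont_aux m p' θ ω).aestronglyMeasurable
    (Filter.Eventually.of_forall fun u => ?_)
  rw [Real.norm_eq_abs, abs_of_nonneg (by positivity), hkey u]
  set d : ℝ := ‖u - u₀‖ with hd
  have hd0 : 0 ≤ d := norm_nonneg _
  by_cases hdR : d ≤ Rb
  · have hmem : u ∈ Metric.closedBall u₀ Rb := by
      rw [Metric.mem_closedBall, dist_eq_norm]; exact hdR
    rw [hg]
    simp only [Set.indicator_of_mem hmem]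
    have h1 : ((1 + |A - θ * d ^ 2|) ^ m)⁻¹ ≤ 1 := by
      apply inv_le_one_of_one_le₀
      apply one_le_pow₀
      have : 0 ≤ |A - θ * d ^ 2| := abs_nonneg _
      linarith
    have h2 : 0 ≤ (2 / ε) ^ m * ((1 + d) ^ (2 * m))⁻¹ := by positivity
    linarith
  · push_neg at hdR
    have hmem : u ∉ Metric.closedBall u₀ Rb := by
      rw [Metric.mem_closedBall, dist_eq_norm, ← hd]; linarith
    rw [hg]
    simp only [Set.indicator_of_notMem hmem, zero_add]
    have hd2 : |θ| * d ^ 2 > 2 * |A| + 2 := by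
      have h1 : Rb ^ 2 < d ^ 2 := by nlinarith [Real.sqrt_nonneg ((2 * |A| + 2) / |θ|)]
      have h2 : |θ| > 0 := abs_pos.mpr hθ
      calc 2 * |A| + 2 = ((2 * |A| + 2) / |θ|) * |θ| := by field_simp
      _ = Rb ^ 2 * |θ| := by rw [hRbsq]
      _ < d ^ 2 * |θ| := by apply mul_lt_mul_of_pos_right h1 h2
      _ = |θ| * d ^ 2 := by ring
    have habs : |θ| * d ^ 2 - |A| ≤ |A - θ * d ^ 2| := by
      have h1 : |θ * d ^ 2| - |A| ≤ |θ * d ^ 2 - A| := by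
        have := abs_sub_abs_le_abs_sub (θ * d ^ 2) A
        linarith
      rw [abs_sub_comm] at h1
      calc |θ| * d ^ 2 - |A| = |θ * d ^ 2| - |A| := by
            rw [abs_mul, abs_of_nonneg (by positivity : (0:ℝ) ≤ d ^ 2)]
      _ ≤ |A - θ * d ^ 2| := h1
    have hlow : (ε / 2) * (1 + d) ^ 2 ≤ 1 + |A - θ * d ^ 2| := by
      nlinarith [sq_nonneg (d - 1), mul_le_mul_of_nonneg_right hεθ (sq_nonneg d)]
    calc ((1 + |A - θ * d ^ 2|) ^ m)⁻¹ ≤ (((ε / 2) * (1 + d) ^ 2) ^ m)⁻¹ := by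
          apply inv_anti₀ (by positivity)
          exact pow_le_pow_left₀ (by positivity) hlow m
    _ = (2 / ε) ^ m * ((1 + d) ^ (2 * m))⁻¹ := by
          rw [mul_pow, ← pow_mul, mul_inv]
          congr 1
          rw [← inv_pow]
          congr 1
          rw [inv_div]
    _ ≤ (2 / ε) ^ m * ((1 + d) ^ (2 * m))⁻¹ := le_rfl

end S17

namespace S17

variable {m : ℕ}

noncomputable def splitEquiv (b : OrthonormalBasis (Fin (m+1)) ℝ (EuclideanSpace ℝ (Fin (m+1)))) :
    (ℝ × (Fin m → ℝ)) ≃ᵐ EuclideanSpace ℝ (Fin (m+1)) :=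
  ((MeasurableEquiv.piFinSuccAbove (fun _ : Fin (m+1) => ℝ) 0).symm.trans
      (MeasurableEquiv.toLp 2 (Fin (m+1) → ℝ))).trans b.measurableEquiv.symm

lemma splitEquiv_measurePreserving
    (b : OrthonormalBasis (Fin (m+1)) ℝ (EuclideanSpace ℝ (Fin (m+1)))) :
    MeasurePreserving (splitEquiv b) volume volume := by
  have h1 : MeasurePreserving
      ((MeasurableEquiv.piFinSuccAbove (fun _ : Fin (m+1) => ℝ) 0).symm) volume volume :=
    (volume_preserving_piFinSuccAbove (fun _ : Fin (m+1) => ℝ) 0).symm _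
  have h2 : MeasurePreserving ((MeasurableEquiv.toLp 2 (Fin (m+1) → ℝ)))
      volume volume :=
    (EuclideanSpace.volume_preserving_symm_measurableEquiv_toLp (Fin (m+1))).symm _
  have h3 : MeasurePreserving (b.measurableEquiv.symm) volume volume :=
    b.measurePreserving_measurableEquiv.symm _
  have hco : ⇑(splitEquiv b) = (⇑b.measurableEquiv.symm) ∘
      ((⇑(MeasurableEquiv.toLp 2 (Fin (m+1) → ℝ))) ∘
        (⇑(MeasurableEquiv.piFinSuccAbove (fun _ : Fin (m+1) => ℝ) 0).symm)) := rfl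
  rw [hco]
  exact h3.comp (h2.comp h1)

lemma splitEquiv_apply (b : OrthonormalBasis (Fin (m+1)) ℝ (EuclideanSpace ℝ (Fin (m+1))))
    (t : ℝ) (y : Fin m → ℝ) :
    splitEquiv b (t, y) =
      b.repr.symm ((MeasurableEquiv.toLp 2 (Fin (m+1) → ℝ)) (Fin.insertNth 0 t y)) := by
  rfl

lemma splitEquiv_add (b : OrthonormalBasis (Fin (m+1)) ℝ (EuclideanSpace ℝ (Fin (m+1))))
    (t : ℝ) (y : Fin m → ℝ) :
    splitEquiv b (t, y) = splitEquiv b (0, y) + t • b 0 := by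
  rw [splitEquiv_apply, splitEquiv_apply]
  have hP : (MeasurableEquiv.toLp 2 (Fin (m+1) → ℝ)) (Fin.insertNth 0 t y) =
      (MeasurableEquiv.toLp 2 (Fin (m+1) → ℝ)) (Fin.insertNth 0 0 y)
        + t • EuclideanSpace.single (0 : Fin (m+1)) (1 : ℝ) := by
    ext j
    refine Fin.cases ?_ (fun i => ?_) j
    · simp [MeasurableEquiv.coe_toLp, Fin.insertNth_apply_same,
        EuclideanSpace.single_apply]
    · rw [← Fin.zero_succAbove i]
      simp [MeasurableEquiv.coe_toLp, Fin.insertNth_apply_succAbove,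
        EuclideanSpace.single_apply, Fin.succ_ne_zero]
  rw [hP, map_add, LinearIsometryEquiv.map_smul, OrthonormalBasis.repr_symm_single]

lemma splitEquiv_inner (b : OrthonormalBasis (Fin (m+1)) ℝ (EuclideanSpace ℝ (Fin (m+1))))
    (t : ℝ) (y : Fin m → ℝ) :
    ⟪b 0, splitEquiv b (t, y)⟫ = t := by
  rw [← OrthonormalBasis.repr_apply_apply, splitEquiv_apply,
    LinearIsometryEquiv.apply_symm_apply]
  simp [MeasurableEquiv.coe_toLp, Fin.insertNth_apply_same]

lemma exists_adapted_basis (w₁ : EuclideanSpace ℝ (Fin (m+1))) (hw : ‖w₁‖ = 1) :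
    ∃ b : OrthonormalBasis (Fin (m+1)) ℝ (EuclideanSpace ℝ (Fin (m+1))), b 0 = w₁ := by
  have hcard : finrank ℝ (EuclideanSpace ℝ (Fin (m+1))) = Fintype.card (Fin (m+1)) := by
    simp [finrank_euclideanSpace]
  have horth : Orthonormal ℝ (({0} : Set (Fin (m+1))).restrict (fun _ => w₁)) := by
    constructor
    · intro i; exact hw
    · intro i j hij
      exfalso; apply hij
      apply Subtype.ext
      have hi := i.2; have hj := j.2
      simp only [Set.mem_singleton_iff] at hi hj
      rw [hi, hj]
  obtain ⟨b, hb⟩ := Orthonormal.exists_orthonormalBasis_extension_of_card_eq hcard horth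
  exact ⟨b, hb 0 rfl⟩

lemma pi_univ_top (hm : 1 ≤ m) : (volume : Measure (Fin m → ℝ)) Set.univ = ⊤ := by
  rw [volume_pi, Measure.pi_univ]
  simp only [Real.volume_univ, Finset.prod_const, Finset.card_univ, Fintype.card_fin]
  exact ENNReal.top_pow (by omega)

lemma integral_slice_const_eq_zero (hm : 1 ≤ m)
    (g : EuclideanSpace ℝ (Fin (m+1)) → ℝ) (w₁ : EuclideanSpace ℝ (Fin (m+1)))
    (hw : ‖w₁‖ = 1) (c₀ : ℝ)
    (hline : ∀ v, (∫ t : ℝ, g (v + t • w₁)) = c₀) :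
    (∫ v, g v) = 0 := by
  obtain ⟨b, hb0⟩ := exists_adapted_basis w₁ hw
  have hmp := splitEquiv_measurePreserving b
  have hcomp : (∫ v, g v) = ∫ z : ℝ × (Fin m → ℝ), g (splitEquiv b z) :=
    (hmp.integral_comp (splitEquiv b).measurableEmbedding g).symm
  rw [hcomp]
  by_cases hI : Integrable (fun z : ℝ × (Fin m → ℝ) => g (splitEquiv b z)) volume
  · rw [Measure.volume_eq_prod] at hI ⊢
    rw [integral_prod_symm _ hI]
    have hinner : ∀ y : Fin m → ℝ, (∫ t : ℝ, g (splitEquiv b (t, y))) = c₀ := by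
      intro y
      have h : ∀ t : ℝ, splitEquiv b (t, y) = splitEquiv b (0, y) + t • w₁ := by
        intro t; rw [splitEquiv_add, hb0]
      have h2 : (fun t : ℝ => g (splitEquiv b (t, y)))
          = fun t => g (splitEquiv b (0, y) + t • w₁) := funext fun t => by rw [h t]
      rw [show (∫ t : ℝ, g (splitEquiv b (t, y)))
          = ∫ t : ℝ, g (splitEquiv b (0, y) + t • w₁) from congrArg _ h2]
      exact hline _
    calc (∫ y, ∫ t, g (splitEquiv b (t, y))) = ∫ _y : Fin m → ℝ, c₀ := by
          congr 1; funext y; exact hinner y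
    _ = 0 := by rw [integral_const, measureReal_def, pi_univ_top hm]; simp
  · exact integral_undef hI

lemma integral_comp_inner_eq_zero (hm : 1 ≤ m)
    (ρ : ℝ → ℝ) (w₁ : EuclideanSpace ℝ (Fin (m+1))) (hw : ‖w₁‖ = 1) :
    (∫ u, ρ ⟪w₁, u⟫) = 0 := by
  obtain ⟨b, hb0⟩ := exists_adapted_basis w₁ hw
  have hmp := splitEquiv_measurePreserving b
  have hcomp : (∫ u, ρ ⟪w₁, u⟫) = ∫ z : ℝ × (Fin m → ℝ), ρ ⟪w₁, splitEquiv b z⟫ :=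
    (hmp.integral_comp (splitEquiv b).measurableEmbedding _).symm
  have hco : (fun z : ℝ × (Fin m → ℝ) => ρ ⟪w₁, splitEquiv b z⟫) = fun z => ρ z.1 := by
    funext z
    have := splitEquiv_inner b z.1 z.2
    rw [hb0] at this
    rw [show (z.1, z.2) = z from rfl] at this
    rw [this]
  rw [hcomp, hco]
  by_cases hI : Integrable (fun z : ℝ × (Fin m → ℝ) => ρ z.1) volume
  · rw [Measure.volume_eq_prod] at hI ⊢
    rw [integral_prod _ hI]
    have : ∀ t : ℝ, (∫ _y : Fin m → ℝ, ρ t) = 0 := by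
      intro t
      rw [integral_const, measureReal_def, pi_univ_top hm]; simp
    calc (∫ t : ℝ, ∫ _y : Fin m → ℝ, ρ t) = ∫ _t : ℝ, (0:ℝ) := by
          congr 1; funext t; exact this t
    _ = 0 := integral_zero _ _
  · exact integral_undef hI

end S17

namespace S17

lemma key_integrable_real {k : ℕ} (hk : 1 < k) (p' : ℝ) :
    Integrable (fun t : ℝ => ((1 + |p' + t|) ^ k)⁻¹) := by
  have h : Integrable (fun t : ℝ => (1 + ‖t‖) ^ (-(k:ℝ))) := by
    apply integrable_one_add_norm
    simp only [finrank_self]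
    exact_mod_cast hk
  refine (h.comp_add_right p').congr (Filter.Eventually.of_forall fun t => ?_)
  show (1 + ‖t + p'‖) ^ (-(k:ℝ)) = ((1 + |p' + t|) ^ k)⁻¹
  rw [Real.norm_eq_abs, add_comm t p', Real.rpow_neg (by positivity), Real.rpow_natCast]

lemma key_integrable_n1 {k : ℕ} (hk : 1 < k) (p' : ℝ) (ω : EuclideanSpace ℝ (Fin 1))
    (hω : ‖ω‖ = 1) :
    Integrable (fun u : EuclideanSpace ℝ (Fin 1) => ((1 + |p' + ⟪ω, u⟫|) ^ k)⁻¹) := by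
  obtain ⟨b, hb0⟩ := exists_adapted_basis (m := 0) ω hω
  have h1 : MeasurePreserving ((MeasurableEquiv.funUnique (Fin 1) ℝ).symm) volume volume :=
    (volume_preserving_funUnique (Fin 1) ℝ).symm _
  have h2 : MeasurePreserving ((MeasurableEquiv.toLp 2 (Fin 1 → ℝ))) volume volume :=
    (EuclideanSpace.volume_preserving_symm_measurableEquiv_toLp (Fin 1)).symm _
  have h3 : MeasurePreserving (b.measurableEquiv.symm) volume volume :=
    b.measurePreserving_measurableEquiv.symm _
  set e : ℝ ≃ᵐ EuclideanSpace ℝ (Fin 1) :=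
    ((MeasurableEquiv.funUnique (Fin 1) ℝ).symm.trans
      (MeasurableEquiv.toLp 2 (Fin 1 → ℝ))).trans b.measurableEquiv.symm with he
  have hmp : MeasurePreserving e volume volume := by
    have hco : ⇑e = ⇑b.measurableEquiv.symm ∘
        (⇑(MeasurableEquiv.toLp 2 (Fin 1 → ℝ)) ∘
          ⇑(MeasurableEquiv.funUnique (Fin 1) ℝ).symm) := rfl
    rw [hco]
    exact h3.comp (h2.comp h1)
  have hinner : ∀ t : ℝ, ⟪ω, e t⟫ = t := by
    intro t
    rw [← hb0, ← OrthonormalBasis.repr_apply_apply]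
    show b.repr (b.repr.symm ((MeasurableEquiv.toLp 2 (Fin 1 → ℝ))
      ((MeasurableEquiv.funUnique (Fin 1) ℝ).symm t))) 0 = t
    rw [LinearIsometryEquiv.apply_symm_apply]
    simp [MeasurableEquiv.coe_toLp, MeasurableEquiv.funUnique]
  rw [← hmp.integrable_comp_emb e.measurableEmbedding]
  refine (key_integrable_real hk p').congr (Filter.Eventually.of_forall fun t => ?_)
  show ((1 + |p' + t|) ^ k)⁻¹ = ((1 + |p' + ⟪ω, e t⟫|) ^ k)⁻¹
  rw [hinner]

end S17

namespace S17

variable {n : ℕ}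

noncomputable def embF (n : ℕ) (x : EuclideanSpace ℝ (Fin n)) (y : ℝ) :
    EuclideanSpace ℝ (Fin n ⊕ Unit) :=
  (EuclideanSpace.equiv (Fin n ⊕ Unit) ℝ).symm (Sum.elim (fun j => x j) (fun _ => y))

lemma embF_apply_inl (x : EuclideanSpace ℝ (Fin n)) (y : ℝ) (i : Fin n) :
    embF n x y (Sum.inl i) = x i := rfl

lemma embF_apply_inr (x : EuclideanSpace ℝ (Fin n)) (y : ℝ) (u : Unit) :
    embF n x y (Sum.inr u) = y := rfl

noncomputable def proj1 (w : EuclideanSpace ℝ (Fin n ⊕ Unit)) : EuclideanSpace ℝ (Fin n) :=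
  WithLp.toLp 2 fun i => w (Sum.inl i)

noncomputable def proj2 (w : EuclideanSpace ℝ (Fin n ⊕ Unit)) : ℝ := w (Sum.inr ())

lemma embF_decomp (w : EuclideanSpace ℝ (Fin n ⊕ Unit)) : w = embF n (proj1 w) (proj2 w) := by
  ext j
  cases j with
  | inl i => rfl
  | inr u => cases u; rfl

lemma embF_add (x x' : EuclideanSpace ℝ (Fin n)) (y y' : ℝ) :
    embF n x y + embF n x' y' = embF n (x + x') (y + y') := by
  ext j
  cases j with
  | inl i => simp [embF_apply_inl, PiLp.add_apply]
  | inr u => cases u; simp [embF_apply_inr, PiLp.add_apply]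

lemma embF_smul (t : ℝ) (x : EuclideanSpace ℝ (Fin n)) (y : ℝ) :
    t • embF n x y = embF n (t • x) (t * y) := by
  ext j
  cases j with
  | inl i => simp [embF_apply_inl, PiLp.smul_apply]
  | inr u => cases u; simp [embF_apply_inr, PiLp.smul_apply]

lemma embF_norm_sq (x : EuclideanSpace ℝ (Fin n)) (y : ℝ) :
    ‖embF n x y‖ ^ 2 = ‖x‖ ^ 2 + y ^ 2 := by
  rw [EuclideanSpace.norm_eq, EuclideanSpace.norm_eq, Real.sq_sqrt (by positivity),
    Real.sq_sqrt (by positivity)]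
  rw [Fintype.sum_sum_type]
  simp [embF_apply_inl, embF_apply_inr, sq_abs]

lemma embF_inner (a x : EuclideanSpace ℝ (Fin n)) (b y : ℝ) :
    ⟪embF n a b, embF n x y⟫ = ⟪a, x⟫ + b * y := by
  rw [PiLp.inner_apply, PiLp.inner_apply, Fintype.sum_sum_type]
  simp [embF_apply_inl, embF_apply_inr, RCLike.inner_apply, conj_trivial, mul_comm]

lemma embF_continuous : Continuous (fun q : (EuclideanSpace ℝ (Fin n)) × ℝ => embF n q.1 q.2) := by
  unfold embF
  apply Continuous.comp
  · exact (PiLp.continuous_toLp 2 (fun _ : Fin n ⊕ Unit => ℝ))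
  · apply continuous_pi
    intro j
    cases j with
    | inl i =>
      have : Continuous (fun q : (EuclideanSpace ℝ (Fin n)) × ℝ => q.1 i) :=
        (continuous_apply i).comp ((PiLp.continuous_ofLp 2 (fun _ : Fin n => ℝ)).comp
          continuous_fst)
      simpa using this
    | inr u => cases u; simpa using (continuous_snd :
        Continuous (fun q : (EuclideanSpace ℝ (Fin n)) × ℝ => q.2))

end S17

namespace S17

lemma integrable_of_bound {A W : Type*}
    [MeasureSpace A] [SigmaFinite (volume : Measure A)]
    [NormedAddCommGroup W] [MeasureSpace W] [SigmaFinite (volume : Measure W)]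
    [MeasurableAdd W] [(volume : Measure W).IsAddRightInvariant]
    (f : A × W → ℝ) (hf : AEStronglyMeasurable f ((volume : Measure A).prod volume))
    (C : ℝ) (hC : 0 ≤ C) (g : A → ℝ) (hg : Integrable g (volume : Measure A))
    (sh : A → W) (m : ℕ)
    (hbound : ∀ a w, ‖f (a, w)‖ ≤ C * g a * ((1 + ‖w + sh a‖) ^ m)⁻¹)
    (hWint : Integrable (fun w : W => ((1 + ‖w‖) ^ m)⁻¹) (volume : Measure W)) :
    Integrable f ((volume : Measure A).prod volume) := by
  have hshift : ∀ a : A, Integrable (fun w : W => ((1 + ‖w + sh a‖) ^ m)⁻¹) :=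
    fun a => hWint.comp_add_right (sh a)
  have hWval : ∀ a : A, (∫ w : W, ((1 + ‖w + sh a‖) ^ m)⁻¹) = ∫ w : W, ((1 + ‖w‖) ^ m)⁻¹ :=
    fun a => integral_add_right_eq_self (μ := (volume : Measure W))
      (fun w => ((1 + ‖w‖) ^ m)⁻¹) (sh a)
  rw [integrable_prod_iff hf]
  have haeint : ∀ᵐ a ∂(volume : Measure A), Integrable (fun w => f (a, w)) := by
    filter_upwards [hf.prodMk_left] with a ha
    exact ((hshift a).const_mul (C * g a)).mono' ha
      (Filter.Eventually.of_forall fun w => hbound a w)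
  refine ⟨haeint, ?_⟩
  apply Integrable.mono' (hg.const_mul (C * (∫ w : W, ((1 + ‖w‖) ^ m)⁻¹)))
    hf.norm.integral_prod_right'
  filter_upwards [haeint] with a ha
  rw [Real.norm_eq_abs, abs_of_nonneg (integral_nonneg fun w => norm_nonneg _)]
  calc (∫ w, ‖f (a, w)‖) ≤ ∫ w : W, C * g a * ((1 + ‖w + sh a‖) ^ m)⁻¹ := by
        apply integral_mono ha.norm ((hshift a).const_mul _)
        intro w; exact hbound a w
  _ = C * g a * ∫ w : W, ((1 + ‖w + sh a‖) ^ m)⁻¹ := integral_const_mul _ _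
  _ = C * (∫ w : W, ((1 + ‖w‖) ^ m)⁻¹) * g a := by rw [hWval a]; ring

end S17

namespace S17
lemma eq_one_of_sq_eq_one {a : ℝ} (h0 : 0 ≤ a) (h : a ^ 2 = 1) : a = 1 := by
  have h2 : (a - 1) * (a + 1) = 0 := by nlinarith
  rcases mul_eq_zero.mp h2 with h3 | h3
  · linarith
  · linarith
end S17

set_option maxHeartbeats 2000000 in
open S17 in
theorem stmt17 (n : ℕ) (hn : 1 ≤ n)
    (F : SchwartzMap (EuclideanSpace ℝ (Fin n ⊕ Unit)) ℝ)
    (ω : EuclideanSpace ℝ (Fin n)) (θ : ℝ) (hsph : ‖ω‖ ^ 2 + θ ^ 2 = 1) (p : ℝ) :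
    let emb : EuclideanSpace ℝ (Fin n) → ℝ → EuclideanSpace ℝ (Fin n ⊕ Unit) :=
      fun x y => (EuclideanSpace.equiv (Fin n ⊕ Unit) ℝ).symm
        (Sum.elim (fun j => x j) (fun _ => y))
    let ν : EuclideanSpace ℝ (Fin n ⊕ Unit) := emb ω θ
    let R : (EuclideanSpace ℝ (Fin n ⊕ Unit) → ℝ) → ℝ → ℝ := fun φ q =>
      ∫ w in {w : EuclideanSpace ℝ (Fin n ⊕ Unit) | ⟪ν, w⟫ = q}, φ w ∂μH[(n : ℝ)]
    R (fun w => ∫ u : EuclideanSpace ℝ (Fin n), F (w + emb u (-‖u‖ ^ 2))) p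
      = ∫ u : EuclideanSpace ℝ (Fin n),
          R (fun w => F w) (p + ⟪ω, u⟫ - θ * ‖u‖ ^ 2) := by
  intro emb ν R
  obtain ⟨m, rfl⟩ : ∃ m, n = m + 1 := ⟨n - 1, by omega⟩
  set q : (EuclideanSpace ℝ (Fin (m + 1))) → ℝ := fun u => ⟪ω, u⟫ - θ * ‖u‖ ^ 2 with hq
  set cm : (EuclideanSpace ℝ (Fin (m + 1))) → EuclideanSpace ℝ (Fin (m + 1) ⊕ Unit) :=
    fun u => embF (m + 1) u (-‖u‖ ^ 2) with hcm
  have hdim : Module.finrank ℝ (EuclideanSpace ℝ (Fin (m + 1) ⊕ Unit)) = (m + 1) + 1 := by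
    simp [finrank_euclideanSpace]
  have hν_eq : ν = embF (m + 1) ω θ := rfl
  have hν1 : ‖ν‖ = 1 := by
    have h := embF_norm_sq ω θ
    rw [hν_eq]
    exact eq_one_of_sq_eq_one (norm_nonneg _) (by rw [h, hsph])
  have hinner_ν : ∀ (u : (EuclideanSpace ℝ (Fin (m + 1)))) (r : ℝ), ⟪ν, embF (m + 1) u r⟫ = ⟪ω, u⟫ + θ * r := by
    intro u r; rw [hν_eq, embF_inner]
  obtain ⟨T, hT0, hTs⟩ := exists_isometry_orthogonal hdim ν hν1
  obtain ⟨c, hc⟩ := hausdorff_eq_smul_volume (m + 1)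
  have hq_inner : ∀ u, ⟪ν, cm u⟫ = q u := by
    intro u
    rw [hcm]
    show ⟪ν, embF (m + 1) u (-‖u‖ ^ 2)⟫ = q u
    rw [hinner_ν, hq]; ring
  have hdecomp : ∀ u, ∃ x, T x = cm u - q u • ν := by
    intro u
    apply hTs
    rw [inner_sub_right, hq_inner, real_inner_smul_right, real_inner_self_eq_norm_sq, hν1]
    ring
  choose bm hbm using hdecomp
  have hbm' : ∀ u, cm u = q u • ν + T (bm u) := by
    intro u; rw [hbm u]; abel
  have hkey : ∀ (x : (EuclideanSpace ℝ (Fin (m + 1)))) u, p • ν + T x + cm u = (p + q u) • ν + T (x + bm u) := by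
    intro x u
    rw [hbm' u, map_add, add_smul]
    abel
  have hns : ∀ (a : ℝ) (z : (EuclideanSpace ℝ (Fin (m + 1)))), ‖a • ν + T z‖ ^ 2 = a ^ 2 + ‖z‖ ^ 2 := by
    intro a z
    rw [norm_add_sq_real, real_inner_smul_left, hT0, norm_smul, T.norm_map,
      Real.norm_eq_abs, mul_pow, sq_abs, hν1]
    ring
  have hshift : ∀ u, (∫ x : (EuclideanSpace ℝ (Fin (m + 1))), F (p • ν + T x + cm u)) = ∫ x : (EuclideanSpace ℝ (Fin (m + 1))), F ((p + q u) • ν + T x) := by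
    intro u
    have h1 : (fun x : (EuclideanSpace ℝ (Fin (m + 1))) => F (p • ν + T x + cm u))
        = fun x => F ((p + q u) • ν + T (x + bm u)) := funext fun x => by rw [hkey]
    rw [h1]
    exact integral_add_right_eq_self (μ := (volume : Measure (EuclideanSpace ℝ (Fin (m + 1)))))
      (fun x => F ((p + q u) • ν + T x)) (bm u)
  obtain ⟨C, hC0, hCb⟩ := schwartz_bound F (2 * (m + 2))
  set M : ℕ := m + 2 with hM
  have hptw : ∀ (u : (EuclideanSpace ℝ (Fin (m + 1)))) (x : (EuclideanSpace ℝ (Fin (m + 1)))), ‖F (p • ν + T x + cm u)‖ ≤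
      C * ((1 + |p + q u|) ^ M)⁻¹ * ((1 + ‖x + bm u‖) ^ M)⁻¹ := by
    intro u x
    set W := ‖p • ν + T x + cm u‖ with hW
    have hW2 : W ^ 2 = (p + q u) ^ 2 + ‖x + bm u‖ ^ 2 := by rw [hW, hkey]; exact hns _ _
    have hWnn : 0 ≤ W := norm_nonneg _
    have ha : |p + q u| ≤ W := by
      nlinarith [sq_abs (p + q u), sq_nonneg (‖x + bm u‖), abs_nonneg (p + q u)]
    have hb : ‖x + bm u‖ ≤ W := by
      nlinarith [sq_nonneg (p + q u), norm_nonneg (x + bm u)]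
    calc ‖F (p • ν + T x + cm u)‖ ≤ C * ((1 + W) ^ (2 * M))⁻¹ := hCb _
    _ ≤ C * (((1 + |p + q u|) ^ M)⁻¹ * ((1 + ‖x + bm u‖) ^ M)⁻¹) :=
        mul_le_mul_of_nonneg_left (inv_pow_bound (abs_nonneg _) (norm_nonneg _) ha hb M) hC0.le
    _ = _ := by ring
  have hcm_cont : Continuous cm := by
    rw [hcm]
    exact embF_continuous.comp (continuous_id.prodMk ((continuous_norm.pow 2).neg))
  have hGarg_cont : Continuous (fun z : (EuclideanSpace ℝ (Fin (m + 1))) × (EuclideanSpace ℝ (Fin (m + 1))) => F (p • ν + T z.2 + cm z.1)) :=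
    F.continuous.comp
      ((continuous_const.add (T.continuous.comp continuous_snd)).add (hcm_cont.comp continuous_fst))
  set G : EuclideanSpace ℝ (Fin (m + 1) ⊕ Unit) → ℝ :=
    fun w => ∫ u : (EuclideanSpace ℝ (Fin (m + 1))), F (w + emb u (-‖u‖ ^ 2)) with hG
  have hGeq : ∀ w, G w = ∫ u : (EuclideanSpace ℝ (Fin (m + 1))), F (w + cm u) := fun w => rfl
  have hGcont : Continuous G := by
    rw [continuous_iff_continuousAt]
    intro w₀
    set M₀ : ℝ := ‖w₀‖ + 1 with hM₀
    have hM₀1 : 1 ≤ M₀ := by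
      have := norm_nonneg w₀; rw [hM₀]; linarith
    apply continuousAt_of_dominated
      (bound := fun u : (EuclideanSpace ℝ (Fin (m + 1))) => C * (1 + M₀) ^ (2 * M) * ((1 + ‖u‖) ^ (2 * M))⁻¹)
    · exact Filter.Eventually.of_forall fun w =>
        (F.continuous.comp (continuous_const.add hcm_cont)).aestronglyMeasurable
    · have hball : Metric.closedBall w₀ 1 ∈ nhds w₀ := Metric.closedBall_mem_nhds w₀ one_pos
      filter_upwards [hball] with w hw
      apply Filter.Eventually.of_forall
      intro u
      have hwle : ‖w‖ ≤ M₀ := by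
        have h1 : ‖w - w₀‖ ≤ 1 := mem_closedBall_iff_norm.mp hw
        have h2 : ‖w‖ ≤ ‖w - w₀‖ + ‖w₀‖ := by
          calc ‖w‖ = ‖(w - w₀) + w₀‖ := by rw [sub_add_cancel]
          _ ≤ ‖w - w₀‖ + ‖w₀‖ := norm_add_le _ _
        rw [hM₀]; linarith
      have hcmn : ‖u‖ ≤ ‖cm u‖ := by
        have h := embF_norm_sq u (-‖u‖ ^ 2)
        have h' : ‖cm u‖ ^ 2 = ‖u‖ ^ 2 + (-‖u‖ ^ 2) ^ 2 := h
        nlinarith [norm_nonneg (cm u), norm_nonneg u]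
      have hlow : 1 + ‖u‖ ≤ (1 + M₀) * (1 + ‖w + cm u‖) := by
        have h1 : ‖cm u‖ - ‖w‖ ≤ ‖w + cm u‖ := by
          have h2 : ‖cm u‖ ≤ ‖w + cm u‖ + ‖w‖ := by
            calc ‖cm u‖ = ‖(w + cm u) - w‖ := by rw [add_sub_cancel_left]
            _ ≤ ‖w + cm u‖ + ‖w‖ := norm_sub_le _ _
          linarith
        nlinarith [norm_nonneg (w + cm u), norm_nonneg u]
      calc ‖F (w + cm u)‖ ≤ C * ((1 + ‖w + cm u‖) ^ (2 * M))⁻¹ := hCb _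
      _ ≤ C * (1 + M₀) ^ (2 * M) * ((1 + ‖u‖) ^ (2 * M))⁻¹ := by
          rw [mul_assoc]
          apply mul_le_mul_of_nonneg_left _ hC0.le
          have h2 : (1 + ‖u‖) ^ (2 * M) ≤ ((1 + M₀) * (1 + ‖w + cm u‖)) ^ (2 * M) :=
            pow_le_pow_left₀ (by positivity) hlow _
          calc ((1 + ‖w + cm u‖) ^ (2 * M))⁻¹
              = (1 + M₀) ^ (2 * M) * (((1 + M₀) * (1 + ‖w + cm u‖)) ^ (2 * M))⁻¹ := by
                rw [mul_pow]
                field_simp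
          _ ≤ (1 + M₀) ^ (2 * M) * ((1 + ‖u‖) ^ (2 * M))⁻¹ :=
              mul_le_mul_of_nonneg_left (inv_anti₀ (by positivity) h2) (by positivity)
    · have := (integrable_one_add_norm_pow (show m + 1 < 2 * M by omega)
        (0 : (EuclideanSpace ℝ (Fin (m + 1))))).const_mul (C * (1 + M₀) ^ (2 * M))
      simpa using this
    · exact Filter.Eventually.of_forall fun u =>
        ((F.continuous.comp (continuous_id.add continuous_const)).continuousAt)
  have hL : R G p = c.toReal • ∫ x : (EuclideanSpace ℝ (Fin (m + 1))), G (p • ν + T x) := by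
    show (∫ w in {w : EuclideanSpace ℝ (Fin (m + 1) ⊕ Unit) | ⟪ν, w⟫ = p}, G w
        ∂μH[((m + 1 : ℕ) : ℝ)]) = _
    rw [radon_param ν hν1 T hT0 hTs G hGcont p, hc, integral_smul_measure]
  have hRin : ∀ u : (EuclideanSpace ℝ (Fin (m + 1))), R (fun w => F w) (p + ⟪ω, u⟫ - θ * ‖u‖ ^ 2)
      = c.toReal • ∫ x : (EuclideanSpace ℝ (Fin (m + 1))), F (p • ν + T x + cm u) := by
    intro u
    show (∫ w in {w : EuclideanSpace ℝ (Fin (m + 1) ⊕ Unit) |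
        ⟪ν, w⟫ = p + ⟪ω, u⟫ - θ * ‖u‖ ^ 2}, F w ∂μH[((m + 1 : ℕ) : ℝ)]) = _
    rw [radon_param ν hν1 T hT0 hTs _ F.continuous _, hc, integral_smul_measure]
    congr 1
    have h1 : p + ⟪ω, u⟫ - θ * ‖u‖ ^ 2 = p + q u := by rw [hq]; ring
    rw [h1, ← hshift u]
  rw [hL]
  have hRHS : (∫ u : (EuclideanSpace ℝ (Fin (m + 1))), R (fun w => F w) (p + ⟪ω, u⟫ - θ * ‖u‖ ^ 2))
      = ∫ u : (EuclideanSpace ℝ (Fin (m + 1))), c.toReal • ∫ x : (EuclideanSpace ℝ (Fin (m + 1))), F (p • ν + T x + cm u) := by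
    congr 1; funext u; exact hRin u
  rw [hRHS, integral_smul]
  congr 1
  have hGx : (∫ x : (EuclideanSpace ℝ (Fin (m + 1))), G (p • ν + T x)) = ∫ x : (EuclideanSpace ℝ (Fin (m + 1))), ∫ u : (EuclideanSpace ℝ (Fin (m + 1))), F (p • ν + T x + cm u) := rfl
  rw [hGx]
  -- main swap lemma
  have hWint : Integrable (fun x : (EuclideanSpace ℝ (Fin (m + 1))) => ((1 + ‖x‖) ^ M)⁻¹) := by
    have := integrable_one_add_norm_pow (show m + 1 < M by omega) (0 : (EuclideanSpace ℝ (Fin (m + 1))))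
    simpa using this
  have main : Integrable (fun u : (EuclideanSpace ℝ (Fin (m + 1))) => ((1 + |p + q u|) ^ M)⁻¹) →
      ((∫ x : (EuclideanSpace ℝ (Fin (m + 1))), ∫ u : (EuclideanSpace ℝ (Fin (m + 1))), F (p • ν + T x + cm u))
        = ∫ u : (EuclideanSpace ℝ (Fin (m + 1))), ∫ x : (EuclideanSpace ℝ (Fin (m + 1))), F (p • ν + T x + cm u)) := by
    intro hgint
    have hint : Integrable (Function.uncurry fun u x : (EuclideanSpace ℝ (Fin (m + 1))) => F (p • ν + T x + cm u))
        ((volume : Measure (EuclideanSpace ℝ (Fin (m + 1)))).prod volume) :=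
      integrable_of_bound _ hGarg_cont.aestronglyMeasurable C hC0.le _ hgint bm M
        (fun u x => hptw u x) hWint
    exact (integral_integral_swap hint).symm
  by_cases hθ0 : θ = 0
  · have hω1 : ‖ω‖ = 1 := by
      have h1 : ‖ω‖ ^ 2 = 1 := by rw [hθ0] at hsph; simpa using hsph
      exact eq_one_of_sq_eq_one (norm_nonneg _) h1
    have hqω : ∀ u : (EuclideanSpace ℝ (Fin (m + 1))), q u = ⟪ω, u⟫ := by
      intro u; rw [hq, hθ0]; ring
    by_cases hm1 : 1 ≤ m
    · -- degenerate case: both sides vanish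
      have hR0 : (∫ u : (EuclideanSpace ℝ (Fin (m + 1))), ∫ x : (EuclideanSpace ℝ (Fin (m + 1))), F (p • ν + T x + cm u)) = 0 := by
        have hrw : (fun u : (EuclideanSpace ℝ (Fin (m + 1))) => ∫ x : (EuclideanSpace ℝ (Fin (m + 1))), F (p • ν + T x + cm u))
            = fun u : (EuclideanSpace ℝ (Fin (m + 1))) => (fun s : ℝ => ∫ x : (EuclideanSpace ℝ (Fin (m + 1))), F ((p + s) • ν + T x)) ⟪ω, u⟫ := by
          funext u
          rw [hshift u, hqω u]
        rw [hrw]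
        exact integral_comp_inner_eq_zero hm1 (fun s : ℝ => ∫ x : (EuclideanSpace ℝ (Fin (m + 1))), F ((p + s) • ν + T x)) ω hω1
      set eY : EuclideanSpace ℝ (Fin (m + 1) ⊕ Unit) := embF (m + 1) 0 1 with heY
      have heY_inner : ⟪ν, eY⟫ = 0 := by
        rw [heY, hinner_ν, hθ0]
        simp
      obtain ⟨w1, hw1⟩ := hTs eY heY_inner
      have heY1 : ‖eY‖ = 1 := by
        have h2 : ‖eY‖ ^ 2 = 1 := by rw [heY, embF_norm_sq]; simp
        exact eq_one_of_sq_eq_one (norm_nonneg _) h2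
      have hw1n : ‖w1‖ = 1 := by
        rw [← T.norm_map w1, hw1, heY1]
      set F2 : (EuclideanSpace ℝ (Fin (m + 1))) → ℝ := fun x' => ∫ s : ℝ, F (embF (m + 1) x' s) with hF2
      have hzz : ∀ (w : EuclideanSpace ℝ (Fin (m + 1) ⊕ Unit)) (u : (EuclideanSpace ℝ (Fin (m + 1)))) (t : ℝ),
          w + cm u + t • eY = embF (m + 1) (proj1 w + u) ((proj2 w - ‖u‖ ^ 2) + t) := by
        intro w u t
        have h1 : cm u = embF (m + 1) u (-‖u‖ ^ 2) := rfl
        have h2 : t • eY = embF (m + 1) (t • (0 : (EuclideanSpace ℝ (Fin (m + 1))))) (t * 1) := by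
          rw [heY, embF_smul]
        calc w + cm u + t • eY
            = embF (m + 1) (proj1 w) (proj2 w) + embF (m + 1) u (-‖u‖ ^ 2)
              + embF (m + 1) (t • (0 : (EuclideanSpace ℝ (Fin (m + 1))))) (t * 1) := by
              rw [← h1, ← h2]
              conv_lhs => rw [embF_decomp w]
        _ = embF (m + 1) (proj1 w + u + t • (0 : (EuclideanSpace ℝ (Fin (m + 1))))) (proj2 w + -‖u‖ ^ 2 + t * 1) := by
              rw [embF_add, embF_add]
        _ = _ := by
              have e1 : proj1 w + u + t • (0 : (EuclideanSpace ℝ (Fin (m + 1)))) = proj1 w + u := by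
                rw [smul_zero, add_zero]
              have e2 : proj2 w + -‖u‖ ^ 2 + t * 1 = (proj2 w - ‖u‖ ^ 2) + t := by ring
              rw [e1, e2]
      have hline : ∀ w : EuclideanSpace ℝ (Fin (m + 1) ⊕ Unit),
          (∫ t : ℝ, G (w + t • eY)) = ∫ x' : (EuclideanSpace ℝ (Fin (m + 1))), F2 x' := by
        intro w
        have hIw : Integrable (Function.uncurry fun (u : (EuclideanSpace ℝ (Fin (m + 1)))) (t : ℝ) => F (w + cm u + t • eY))
            ((volume : Measure (EuclideanSpace ℝ (Fin (m + 1)))).prod volume) := by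
          apply integrable_of_bound _ ?_ C hC0.le
            (fun u : (EuclideanSpace ℝ (Fin (m + 1))) => ((1 + ‖proj1 w + u‖) ^ M)⁻¹) ?_ (fun u : (EuclideanSpace ℝ (Fin (m + 1))) => proj2 w - ‖u‖ ^ 2) M ?_ ?_
          · exact (F.continuous.comp
              ((continuous_const.add (hcm_cont.comp continuous_fst)).add
                (continuous_snd.smul continuous_const))).aestronglyMeasurable
          · have := integrable_one_add_norm_pow (show m + 1 < M by omega) (proj1 w)
            refine this.congr (Filter.Eventually.of_forall fun x => ?_)
            show ((1 + ‖x + proj1 w‖) ^ M)⁻¹ = ((1 + ‖proj1 w + x‖) ^ M)⁻¹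
            rw [add_comm x (proj1 w)]
          · intro u t
            have hz := hzz w u t
            have hWn : ‖w + cm u + t • eY‖ ^ 2
                = ‖proj1 w + u‖ ^ 2 + ((proj2 w - ‖u‖ ^ 2) + t) ^ 2 := by
              rw [hz]; exact embF_norm_sq _ _
            have hWnn : 0 ≤ ‖w + cm u + t • eY‖ := norm_nonneg _
            have hA : |(proj2 w - ‖u‖ ^ 2) + t| ≤ ‖w + cm u + t • eY‖ := by
              nlinarith [sq_abs ((proj2 w - ‖u‖ ^ 2) + t), sq_nonneg (‖proj1 w + u‖),
                abs_nonneg ((proj2 w - ‖u‖ ^ 2) + t)]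
            have hB : ‖proj1 w + u‖ ≤ ‖w + cm u + t • eY‖ := by
              nlinarith [sq_nonneg ((proj2 w - ‖u‖ ^ 2) + t), norm_nonneg (proj1 w + u)]
            calc ‖F (w + cm u + t • eY)‖ ≤ C * ((1 + ‖w + cm u + t • eY‖) ^ (2 * M))⁻¹ := hCb _
            _ ≤ C * (((1 + ‖proj1 w + u‖) ^ M)⁻¹ * ((1 + |(proj2 w - ‖u‖ ^ 2) + t|) ^ M)⁻¹) :=
                mul_le_mul_of_nonneg_left
                  (inv_pow_bound (norm_nonneg _) (abs_nonneg _) hB hA M) hC0.le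
            _ = C * ((1 + ‖proj1 w + u‖) ^ M)⁻¹ * ((1 + ‖t + (proj2 w - ‖u‖ ^ 2)‖) ^ M)⁻¹ := by
                rw [Real.norm_eq_abs, add_comm t (proj2 w - ‖u‖ ^ 2)]
                ring
          · have := key_integrable_real (show 1 < M by omega) 0
            refine this.congr (Filter.Eventually.of_forall fun t => ?_)
            show ((1 + |0 + t|) ^ M)⁻¹ = ((1 + ‖t‖) ^ M)⁻¹
            rw [Real.norm_eq_abs, zero_add]
        calc (∫ t : ℝ, G (w + t • eY)) = ∫ t : ℝ, ∫ u : (EuclideanSpace ℝ (Fin (m + 1))), F (w + cm u + t • eY) := by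
              congr 1; funext t
              rw [hGeq]
              congr 1; funext u
              rw [show w + t • eY + cm u = w + cm u + t • eY from by abel]
        _ = ∫ u : (EuclideanSpace ℝ (Fin (m + 1))), ∫ t : ℝ, F (w + cm u + t • eY) := (integral_integral_swap hIw).symm
        _ = ∫ u : (EuclideanSpace ℝ (Fin (m + 1))), F2 (proj1 w + u) := by
              congr 1; funext u
              rw [show (fun t : ℝ => F (w + cm u + t • eY))
                  = fun t : ℝ => F (embF (m + 1) (proj1 w + u) ((proj2 w - ‖u‖ ^ 2) + t))
                from funext fun t => by rw [hzz w u t]]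
              exact integral_add_left_eq_self
                (fun s : ℝ => F (embF (m + 1) (proj1 w + u) s)) (proj2 w - ‖u‖ ^ 2)
        _ = ∫ x' : (EuclideanSpace ℝ (Fin (m + 1))), F2 x' := integral_add_left_eq_self F2 (proj1 w)
      have hL0 : (∫ x : (EuclideanSpace ℝ (Fin (m + 1))), ∫ u : (EuclideanSpace ℝ (Fin (m + 1))), F (p • ν + T x + cm u)) = 0 := by
        have hGg : (fun x : (EuclideanSpace ℝ (Fin (m + 1))) => ∫ u : (EuclideanSpace ℝ (Fin (m + 1))), F (p • ν + T x + cm u))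
            = fun x : (EuclideanSpace ℝ (Fin (m + 1))) => G (p • ν + T x) := rfl
        rw [hGg]
        apply integral_slice_const_eq_zero hm1 _ w1 hw1n (∫ x' : (EuclideanSpace ℝ (Fin (m + 1))), F2 x')
        intro v
        have h1 : ∀ t : ℝ, G (p • ν + T (v + t • w1)) = G ((p • ν + T v) + t • eY) := by
          intro t
          rw [map_add, T.map_smul, hw1]
          rw [show p • ν + (T v + t • eY) = (p • ν + T v) + t • eY from by abel]
        rw [show (fun t : ℝ => G (p • ν + T (v + t • w1)))
            = fun t : ℝ => G ((p • ν + T v) + t • eY) from funext h1]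
        exact hline _
      rw [hL0, hR0]
    · -- m = 0 : n = 1, θ = 0
      have hm0 : m = 0 := by omega
      apply main
      have hqq : (fun u : (EuclideanSpace ℝ (Fin (m + 1))) => ((1 + |p + q u|) ^ M)⁻¹)
          = fun u : (EuclideanSpace ℝ (Fin (m + 1))) => ((1 + |p + ⟪ω, u⟫|) ^ M)⁻¹ := funext fun u => by rw [hqω u]
      rw [hqq]
      subst hm0
      exact key_integrable_n1 (show 1 < M by omega) p ω hω1
  · exact main (key_integrable_theta_ne (show m + 1 < M by omega) p θ hθ0 ω)
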